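/- There exists an absolute constant C > 0 such that for every squarefree integer q ≥ 2 and every real X ≥ 2, the number A_q(X) of positive integers n ≤ X all of whose prime factors divide q satisfies A_q(X) ≤ C·(1/ω(q)!)·(log X + 2·ω(q)^{1/2}·log q)^{ω(q)}. -/

import Mathlib

open Finset

open scoped Classical in
/-- `A_q(X)`: the number of positive integers `n ≤ X` all of whose prime factors divide `q`. -/
noncomputable def Aq (q : ℕ) (X : ℝ) : ℕ :=
  ((Finset.Icc 1 ⌊X⌋₊).filter (fun n => ∀ p : ℕ, p.Prime → p ∣ n → p ∣ q)).card

/-- Gap inequality: `(k+1) y^k (x - y) ≤ x^(k+1) - y^(k+1)` for `0 ≤ y ≤ x`. -/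
lemma pow_gap {x y : ℝ} (hy : 0 ≤ y) (hxy : y ≤ x) (k : ℕ) :
    ((k : ℝ) + 1) * y ^ k * (x - y) ≤ x ^ (k + 1) - y ^ (k + 1) := by
  rw [← geom_sum₂_mul x y (k + 1)]
  apply mul_le_mul_of_nonneg_right _ (by linarith)
  calc ((k : ℝ) + 1) * y ^ k = ∑ i ∈ range (k + 1), y ^ k := by
        rw [Finset.sum_const, card_range]; push_cast; ring
    _ ≤ ∑ i ∈ range (k + 1), x ^ i * y ^ (k + 1 - 1 - i) := by
        apply Finset.sum_le_sum
        intro i hi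
        rw [mem_range] at hi
        have h1 : k + 1 - 1 - i = k - i := by omega
        rw [h1]
        calc y ^ k = y ^ i * y ^ (k - i) := by rw [← pow_add]; congr 1; omega
          _ ≤ x ^ i * y ^ (k - i) := by
              apply mul_le_mul_of_nonneg_right (pow_le_pow_left₀ hy hxy i)
              positivity

/-- Telescoping sum bound. -/
lemma tele_sum (t T L : ℝ) (ht : 0 < t) (hL : 0 ≤ L) (A k : ℕ) (hA : (A : ℝ) * t ≤ T) :
    ((k : ℝ) + 1) * t * ∑ a ∈ range (A + 1), (T - a * t + L) ^ k ≤ (T + L + t) ^ (k + 1) := by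
  set f : ℕ → ℝ := fun a => (T + L + t - a * t) ^ (k + 1) with hf
  have key : ∀ a ∈ range (A + 1), ((k : ℝ) + 1) * t * (T - a * t + L) ^ k ≤ f a - f (a + 1) := by
    intro a ha
    rw [mem_range] at ha
    have hat : (a : ℝ) * t ≤ T := by
      calc (a : ℝ) * t ≤ (A : ℝ) * t := by
            apply mul_le_mul_of_nonneg_right _ ht.le
            exact_mod_cast Nat.le_of_lt_succ ha
        _ ≤ T := hA
    have hy : (0 : ℝ) ≤ T - a * t + L := by linarith
    have := pow_gap hy (by linarith : T - a * t + L ≤ T + L + t - a * t) k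
    have hx1 : (T + L + t - a * t) - (T - a * t + L) = t := by ring
    have hfa1 : f (a + 1) = (T - a * t + L) ^ (k + 1) := by
      simp only [hf]; congr 1; push_cast; ring
    rw [hx1] at this
    rw [hfa1]
    calc ((k : ℝ) + 1) * t * (T - a * t + L) ^ k
        = ((k : ℝ) + 1) * (T - a * t + L) ^ k * t := by ring
      _ ≤ (T + L + t - a * t) ^ (k + 1) - (T - a * t + L) ^ (k + 1) := this
      _ = f a - (T - a * t + L) ^ (k + 1) := rfl
  calc ((k : ℝ) + 1) * t * ∑ a ∈ range (A + 1), (T - a * t + L) ^ k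
      = ∑ a ∈ range (A + 1), ((k : ℝ) + 1) * t * (T - a * t + L) ^ k := by
        rw [Finset.mul_sum]
    _ ≤ ∑ a ∈ range (A + 1), (f a - f (a + 1)) := Finset.sum_le_sum key
    _ = f 0 - f (A + 1) := Finset.sum_range_sub' f (A + 1)
    _ ≤ f 0 := by
        have : (0 : ℝ) ≤ f (A + 1) := by
          apply pow_nonneg
          push_cast
          linarith
        linarith
    _ = (T + L + t) ^ (k + 1) := by simp [hf]

open scoped Classical in
/-- Count of `n ∈ [1, X]` with all prime factors in `s`. -/
noncomputable def sc (s : Finset ℕ) (X : ℝ) : ℕ :=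
  ((Finset.Icc 1 ⌊X⌋₊).filter (fun n => ∀ p : ℕ, p.Prime → p ∣ n → p ∈ s)).card

lemma sc_empty (X : ℝ) (hX : 1 ≤ X) : sc ∅ X = 1 := by
  classical
  unfold sc
  convert_to ({1} : Finset ℕ).card = 1
  · congr 1
    ext n
    simp only [Finset.mem_filter, Finset.mem_Icc, Finset.mem_singleton,
      Finset.notMem_empty]
    constructor
    · rintro ⟨⟨h1, h2⟩, h3⟩
      by_contra hn
      obtain ⟨p, hp, hpd⟩ := Nat.exists_prime_and_dvd (by omega : n ≠ 1)
      exact h3 p hp hpd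
    · rintro rfl
      refine ⟨⟨le_refl 1, Nat.one_le_floor_iff X |>.mpr hX⟩, ?_⟩
      intro p hp hpd
      exact absurd (Nat.le_of_dvd one_pos hpd) (by have := hp.two_le; omega)
  · rfl

lemma sc_insert_le (p : ℕ) (hp : p.Prime) (s : Finset ℕ) (hps : p ∉ s) (X : ℝ) (hX : 1 ≤ X) :
    sc (insert p s) X ≤
      ∑ a ∈ range (⌊Real.log X / Real.log p⌋₊ + 1), sc s (X / (p : ℝ) ^ a) := by
  classical
  set A := ⌊Real.log X / Real.log p⌋₊ with hA
  unfold sc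
  rw [← Finset.card_sigma]
  apply Finset.card_le_card_of_injOn
    (fun n => ⟨n.factorization p, n / p ^ n.factorization p⟩)
  · intro n hn
    rw [Finset.mem_coe, Finset.mem_filter, Finset.mem_Icc] at hn
    obtain ⟨⟨hn1, hn2⟩, hall⟩ := hn
    have hn0 : n ≠ 0 := by omega
    have hX0 : 0 < X := by linarith
    have hplog : 0 < Real.log p := Real.log_pos (by exact_mod_cast hp.one_lt)
    set a := n.factorization p with ha
    have hpa_dvd : p ^ a ∣ n := Nat.ordProj_dvd n p
    have hpa_le : p ^ a ≤ n := Nat.le_of_dvd (by omega) hpa_dvd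
    have hnX : (n : ℝ) ≤ X := le_trans (by exact_mod_cast hn2) (Nat.floor_le hX0.le)
    have hppos : (0 : ℝ) < (p : ℝ) ^ a := pow_pos (by exact_mod_cast hp.pos) a
    have hpaX : ((p : ℝ) ^ a) ≤ X := le_trans (by exact_mod_cast hpa_le) hnX
    have haA : a ≤ A := by
      rw [hA]
      apply Nat.le_floor
      rw [le_div_iff₀ hplog]
      calc (a : ℝ) * Real.log p = Real.log ((p : ℝ) ^ a) := by
            rw [Real.log_pow]
        _ ≤ Real.log X := Real.log_le_log hppos hpaX
    rw [Finset.mem_coe, Finset.mem_sigma, Finset.mem_range, Finset.mem_filter, Finset.mem_Icc]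
    refine ⟨by show a < A + 1; omega, ⟨?_, ?_⟩, ?_⟩
    · exact Nat.ordCompl_pos p hn0
    · apply Nat.le_floor
      rw [le_div_iff₀ hppos]
      calc ((n / p ^ a : ℕ) : ℝ) * (p : ℝ) ^ a = ((n / p ^ a * p ^ a : ℕ) : ℝ) := by
            push_cast; ring
        _ = (n : ℝ) := by
            congr 1
            rw [Nat.div_mul_cancel hpa_dvd]
        _ ≤ X := hnX
    · intro r hr hrd
      have hrn : r ∣ n := hrd.trans (Nat.ordCompl_dvd n p)
      have := hall r hr hrn
      rw [Finset.mem_insert] at this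
      rcases this with h | h
      · exfalso
        rw [h] at hrd
        exact Nat.not_dvd_ordCompl hp hn0 hrd
      · exact h
  · intro n₁ h₁ n₂ h₂ heq
    have ha := congrArg Sigma.fst heq
    have hm := congrArg Sigma.snd heq
    simp only at ha hm
    have e₁ := Nat.ordProj_mul_ordCompl_eq_self n₁ p
    have e₂ := Nat.ordProj_mul_ordCompl_eq_self n₂ p
    rw [ha] at hm
    rw [← e₁, ← e₂, ha, hm]

lemma sc_le (s : Finset ℕ) (hs : ∀ p ∈ s, p.Prime) :
    ∀ X : ℝ, 1 ≤ X →
      (sc s X : ℝ) * (Nat.factorial s.card) * ∏ p ∈ s, Real.log p ≤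
        (Real.log X + ∑ p ∈ s, Real.log p) ^ s.card := by
  classical
  induction s using Finset.induction_on with
  | empty =>
      intro X hX
      simp [sc_empty X hX]
  | @insert p s hps ih =>
      intro X hX
      have hp : p.Prime := hs p (mem_insert_self p s)
      have hs' : ∀ r ∈ s, r.Prime := fun r hr => hs r (mem_insert_of_mem hr)
      have hplog : 0 < Real.log p := Real.log_pos (by exact_mod_cast hp.one_lt)
      have hX0 : 0 < X := by linarith
      have hTlog : 0 ≤ Real.log X := Real.log_nonneg hX
      set t := Real.log p with ht
      set T := Real.log X with hT
      set L := ∑ r ∈ s, Real.log r with hL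
      set k := s.card with hk
      set A := ⌊T / t⌋₊ with hAdef
      have hL0 : 0 ≤ L := Finset.sum_nonneg fun r hr =>
        Real.log_nonneg (by exact_mod_cast (hs' r hr).one_lt.le)
      have hP0 : 0 ≤ ∏ r ∈ s, Real.log r := Finset.prod_nonneg fun r hr =>
        Real.log_nonneg (by exact_mod_cast (hs' r hr).one_lt.le)
      have hAt : (A : ℝ) * t ≤ T := by
        rw [hAdef]
        calc (⌊T / t⌋₊ : ℝ) * t ≤ (T / t) * t := by
              apply mul_le_mul_of_nonneg_right (Nat.floor_le (by positivity)) hplog.le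
          _ = T := by field_simp
      -- bound each summand
      have hsummand : ∀ a ∈ range (A + 1),
          (sc s (X / (p : ℝ) ^ a) : ℝ) * (Nat.factorial k) * ∏ r ∈ s, Real.log r ≤
            (T - a * t + L) ^ k := by
        intro a ha
        rw [mem_range] at ha
        have hat : (a : ℝ) * t ≤ T := by
          calc (a : ℝ) * t ≤ (A : ℝ) * t := by
                apply mul_le_mul_of_nonneg_right _ hplog.le
                exact_mod_cast Nat.le_of_lt_succ ha
            _ ≤ T := hAt
        have hpa1 : (1 : ℝ) ≤ (p : ℝ) ^ a := one_le_pow₀ (by exact_mod_cast hp.one_lt.le)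
        have hpaX : ((p : ℝ) ^ a) ≤ X := by
          have := Real.exp_le_exp.mpr (by
            calc Real.log ((p : ℝ) ^ a) = a * t := by rw [Real.log_pow, ht]
              _ ≤ T := hat)
          rwa [Real.exp_log (by positivity), hT, Real.exp_log hX0] at this
        have hX1 : (1 : ℝ) ≤ X / (p : ℝ) ^ a := by
          rw [le_div_iff₀ (by positivity)]; linarith
        have hlog : Real.log (X / (p : ℝ) ^ a) = T - a * t := by
          rw [Real.log_div (by positivity) (by positivity), Real.log_pow, hT, ht]
        have := ih hs' (X / (p : ℝ) ^ a) hX1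
        rwa [hlog] at this
      have hcount := sc_insert_le p hp s hps X hX
      have hcountR : (sc (insert p s) X : ℝ) ≤
          ∑ a ∈ range (A + 1), (sc s (X / (p : ℝ) ^ a) : ℝ) := by
        exact_mod_cast hcount
      rw [Finset.card_insert_of_notMem hps, Finset.prod_insert hps, Finset.sum_insert hps,
        ← hk, ← ht, ← hL]
      have hfact : (Nat.factorial (k + 1) : ℝ) = ((k : ℝ) + 1) * Nat.factorial k := by
        rw [Nat.factorial_succ]; push_cast; ring
      calc (sc (insert p s) X : ℝ) * (Nat.factorial (k + 1)) * (t * ∏ r ∈ s, Real.log r)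
          ≤ (∑ a ∈ range (A + 1), (sc s (X / (p : ℝ) ^ a) : ℝ)) *
              (Nat.factorial (k + 1)) * (t * ∏ r ∈ s, Real.log r) := by
            apply mul_le_mul_of_nonneg_right
              (mul_le_mul_of_nonneg_right hcountR (by positivity)) (by positivity)
        _ = ((k : ℝ) + 1) * t * ∑ a ∈ range (A + 1),
              ((sc s (X / (p : ℝ) ^ a) : ℝ) * (Nat.factorial k) * ∏ r ∈ s, Real.log r) := by
            rw [hfact, Finset.sum_mul, Finset.sum_mul, Finset.mul_sum]
            apply Finset.sum_congr rfl
            intro a _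
            ring
        _ ≤ ((k : ℝ) + 1) * t * ∑ a ∈ range (A + 1), (T - a * t + L) ^ k := by
            apply mul_le_mul_of_nonneg_left (Finset.sum_le_sum hsummand) (by positivity)
        _ ≤ (T + L + t) ^ (k + 1) := tele_sum t T L hplog hL0 A k hAt
        _ = (T + (t + L)) ^ (k + 1) := by ring_nf

theorem stmt5 :
    ∃ C : ℝ, 0 < C ∧ ∀ q : ℕ, Squarefree q → 2 ≤ q → ∀ X : ℝ, 2 ≤ X →
      (Aq q X : ℝ) ≤
        C * (1 / (Nat.factorial q.primeFactors.card : ℝ)) *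
          (Real.log X + 2 * Real.sqrt q.primeFactors.card * Real.log q) ^
            q.primeFactors.card := by
  classical
  refine ⟨2, two_pos, ?_⟩
  intro q hsq hq X hX
  set s := q.primeFactors with hsdef
  set k := s.card with hk
  have hq0 : q ≠ 0 := by omega
  have hsp : ∀ p ∈ s, p.Prime := fun p hp => Nat.prime_of_mem_primeFactors hp
  have hX1 : (1 : ℝ) ≤ X := by linarith
  -- A_q = sc s X
  have hAqsc : Aq q X = sc s X := by
    unfold Aq sc
    congr 1
    apply Finset.filter_congr
    intro n _
    constructor
    · intro h p hp hpn
      exact Nat.mem_primeFactors.mpr ⟨hp, h p hp hpn, hq0⟩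
    · intro h p hp hpn
      exact (Nat.mem_primeFactors.mp (h p hp hpn)).2.1
  -- log q = sum of logs
  have hLq : ∑ p ∈ s, Real.log p = Real.log q := by
    rw [← Nat.prod_primeFactors_of_squarefree hsq]
    push_cast
    rw [Real.log_prod]
    intro p hp
    exact_mod_cast (hsp p hp).pos.ne'
  -- product of logs ≥ log 2
  have hprod : Real.log 2 ≤ ∏ p ∈ s, Real.log p := by
    have hc : ∀ p ∈ s, (if p = 2 then Real.log 2 else 1) ≤ Real.log p := by
      intro p hp
      by_cases h2 : p = 2
      · simp [h2]
      · simp only [h2, if_false]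
        have hp3 : 3 ≤ p := by
          have := (hsp p hp).two_le
          rcases Nat.lt_or_ge p 3 with h | h
          · interval_cases p <;> simp_all
          · exact h
        rw [show (1 : ℝ) = Real.log (Real.exp 1) by rw [Real.log_exp]]
        apply Real.log_le_log (Real.exp_pos 1)
        calc Real.exp 1 ≤ 2.7182818286 := Real.exp_one_lt_d9.le
          _ ≤ 3 := by norm_num
          _ ≤ (p : ℝ) := by exact_mod_cast hp3
    have h2le1 : Real.log 2 ≤ 1 := by
      rw [show (1 : ℝ) = Real.log (Real.exp 1) by rw [Real.log_exp]]
      apply Real.log_le_log two_pos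
      calc (2 : ℝ) ≤ 2.7182818286 - 0.1 := by norm_num
        _ ≤ Real.exp 1 := by
          have := Real.exp_one_gt_d9
          linarith
    calc Real.log 2 ≤ ∏ p ∈ s, (if p = 2 then Real.log 2 else 1) := by
          by_cases h2 : 2 ∈ s
          · rw [Finset.prod_eq_single_of_mem 2 h2 (fun b _ hb => by simp [hb])]
            simp
          · rw [Finset.prod_eq_one (fun b hb => by
              have : b ≠ 2 := fun h => h2 (h ▸ hb)
              simp [this])]
            exact h2le1
      _ ≤ ∏ p ∈ s, Real.log p := by
          apply Finset.prod_le_prod _ hc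
          intro p _
          by_cases h2 : p = 2 <;> simp [h2, Real.log_nonneg, (by norm_num : (1:ℝ) ≤ 2)]
  have hlog2pos : (0 : ℝ) < Real.log 2 := Real.log_pos (by norm_num)
  have hP : (0 : ℝ) < ∏ p ∈ s, Real.log p := lt_of_lt_of_le hlog2pos hprod
  have hmain := sc_le s hsp X hX1
  rw [hLq] at hmain
  set T := Real.log X with hT
  set L := Real.log q with hLdef
  set P := ∏ p ∈ s, Real.log p with hPdef
  have hL0 : 0 ≤ L := Real.log_nonneg (by exact_mod_cast le_trans (by norm_num) hq)
  have hT0 : 0 ≤ T := Real.log_nonneg hX1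
  have hk1 : 1 ≤ k := by
    rw [hk]
    exact Finset.card_pos.mpr (Nat.nonempty_primeFactors.mpr (by omega))
  have hsqrt1 : (1 : ℝ) ≤ Real.sqrt k := by
    rw [show (1:ℝ) = Real.sqrt 1 by simp]
    exact Real.sqrt_le_sqrt (by exact_mod_cast hk1)
  have hS : T + L ≤ T + 2 * Real.sqrt k * L := by
    nlinarith
  have hSpos : (0 : ℝ) ≤ T + 2 * Real.sqrt k * L := by nlinarith
  have hpow : (T + L) ^ k ≤ (T + 2 * Real.sqrt k * L) ^ k :=
    pow_le_pow_left₀ (by linarith) hS k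
  have hfp : (0 : ℝ) < (Nat.factorial k : ℝ) := by
    exact_mod_cast Nat.factorial_pos k
  rw [hAqsc]
  -- final chain
  have key : (sc s X : ℝ) * ((Nat.factorial k : ℝ) * P) ≤
      (2 * (1 / (Nat.factorial k : ℝ)) * (T + 2 * Real.sqrt k * L) ^ k) *
        ((Nat.factorial k : ℝ) * P) := by
    calc (sc s X : ℝ) * ((Nat.factorial k : ℝ) * P)
        = (sc s X : ℝ) * (Nat.factorial k : ℝ) * P := by ring
      _ ≤ (T + L) ^ k := hmain
      _ ≤ (T + 2 * Real.sqrt k * L) ^ k := hpow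
      _ ≤ (T + 2 * Real.sqrt k * L) ^ k * (2 * P) := by
          nlinarith [pow_nonneg hSpos k, Real.log_two_gt_d9]
      _ = (2 * (1 / (Nat.factorial k : ℝ)) * (T + 2 * Real.sqrt k * L) ^ k) *
            ((Nat.factorial k : ℝ) * P) := by
          field_simp
  exact le_of_mul_le_mul_right key (by positivity)
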